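/- Let X be a bounded random variable on a probability space and λ ∈ (0,1). Then the infimum over y ∈ ℝ of E[(X - y)₊] + λy is attained at y_X(λ) := inf{x ∈ ℝ : P(X > x) ≤ λ}. -/

import Mathlib

open MeasureTheory

/-- The infimum in the Rockafellar–Uryasev representation is attained at the
upper `λ`-quantile `y_X(λ) = inf {x : P(X > x) ≤ λ}`. -/
theorem infimum_attained_at_upper_quantile {Ω : Type*} [MeasurableSpace Ω]
    (P : Measure Ω) [IsProbabilityMeasure P]
    (X : Ω → ℝ) (hX : Measurable X) (M : ℝ) (hbdd : ∀ ω, |X ω| ≤ M)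
    (lam : ℝ) (hlam : lam ∈ Set.Ioo (0:ℝ) 1) :
    (∫ ω, max (X ω - sInf {x : ℝ | (P {ω | X ω > x}).toReal ≤ lam}) 0 ∂P)
        + lam * sInf {x : ℝ | (P {ω | X ω > x}).toReal ≤ lam}
      = ⨅ y : ℝ, ((∫ ω, max (X ω - y) 0 ∂P) + lam * y) := by
  obtain ⟨hlam0, hlam1⟩ := hlam
  set S := {x : ℝ | (P {ω | X ω > x}).toReal ≤ lam} with hSdef
  set q := sInf S with hqdef
  have hmeas : ∀ x : ℝ, MeasurableSet {ω | X ω > x} := fun x => hX measurableSet_Ioi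
  -- integrability of the positive parts
  have hint : ∀ y : ℝ, Integrable (fun ω => max (X ω - y) 0) P := by
    intro y
    refine (integrable_const (|M| + |y|)).mono'
      ((hX.sub measurable_const).max measurable_const).aestronglyMeasurable ?_
    filter_upwards with ω
    rw [Real.norm_eq_abs, abs_of_nonneg (le_max_right _ _)]
    apply max_le
    · have h1 := (abs_le.mp (hbdd ω)).2
      have h2 : M ≤ |M| := le_abs_self M
      have h3 : -y ≤ |y| := neg_le_abs y
      linarith
    · positivity
  -- S is nonempty: M ∈ S
  have hMS : M ∈ S := by
    have hempty : {ω | X ω > M} = ∅ := by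
      ext ω
      simp only [Set.mem_setOf_eq, Set.mem_empty_iff_false, iff_false, not_lt]
      exact le_trans (le_abs_self _) (hbdd ω)
    simp only [hSdef, Set.mem_setOf_eq, hempty, measure_empty, ENNReal.toReal_zero]
    exact hlam0.le
  have hSne : S.Nonempty := ⟨M, hMS⟩
  -- S is bounded below by -M
  have hSbd : BddBelow S := by
    refine ⟨-M, fun x hx => ?_⟩
    by_contra hc
    push_neg at hc
    have huniv : {ω | X ω > x} = Set.univ := by
      ext ω
      simp only [Set.mem_setOf_eq, Set.mem_univ, iff_true]
      have := (abs_le.mp (hbdd ω)).1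
      linarith
    rw [hSdef, Set.mem_setOf_eq, huniv] at hx
    simp [measure_univ] at hx
    linarith
  -- P(X > q) ≤ lam
  have hq_le : (P {ω | X ω > q}).toReal ≤ lam := by
    have hUnion : {ω | X ω > q} = ⋃ n : ℕ, {ω | X ω > q + 1/((n:ℝ)+1)} := by
      ext ω
      simp only [Set.mem_setOf_eq, Set.mem_iUnion]
      constructor
      · intro h
        obtain ⟨n, hn⟩ := exists_nat_one_div_lt (sub_pos.mpr h)
        exact ⟨n, by push_cast at hn ⊢; linarith⟩
      · rintro ⟨n, hn⟩
        have : 0 < 1/((n:ℝ)+1) := by positivity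
        linarith
    have hsub : ∀ n : ℕ, P {ω | X ω > q + 1/((n:ℝ)+1)} ≤ ENNReal.ofReal lam := by
      intro n
      have hpos : q < q + 1/((n:ℝ)+1) := by
        have : 0 < 1/((n:ℝ)+1) := by positivity
        linarith
      obtain ⟨s, hsS, hs⟩ := exists_lt_of_csInf_lt hSne hpos
      have hsubset : {ω | X ω > q + 1/((n:ℝ)+1)} ⊆ {ω | X ω > s} :=
        fun ω hω => lt_of_le_of_lt hs.le hω
      calc P {ω | X ω > q + 1/((n:ℝ)+1)} ≤ P {ω | X ω > s} := measure_mono hsubset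
        _ ≤ ENNReal.ofReal lam := by
            rw [← ENNReal.ofReal_toReal (measure_ne_top P _)]
            exact ENNReal.ofReal_le_ofReal hsS
    have hdir : Directed (· ⊆ ·) (fun n : ℕ => {ω | X ω > q + 1/((n:ℝ)+1)}) := by
      apply Monotone.directed_le
      intro m n hmn ω hω
      simp only [Set.mem_setOf_eq] at *
      have h1 : 1/((n:ℝ)+1) ≤ 1/((m:ℝ)+1) := by
        apply one_div_le_one_div_of_le (by positivity)
        have : (m:ℝ) ≤ n := by exact_mod_cast hmn
        linarith
      linarith
    rw [hUnion, hdir.measure_iUnion]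
    have hle : (⨆ n : ℕ, P {ω | X ω > q + 1/((n:ℝ)+1)}) ≤ ENNReal.ofReal lam :=
      iSup_le hsub
    calc (⨆ n : ℕ, P {ω | X ω > q + 1/((n:ℝ)+1)}).toReal
        ≤ (ENNReal.ofReal lam).toReal := ENNReal.toReal_mono ENNReal.ofReal_ne_top hle
      _ = lam := ENNReal.toReal_ofReal hlam0.le
  -- lam ≤ P(X ≥ q)
  have hq_ge : lam ≤ (P {ω | X ω ≥ q}).toReal := by
    have hInter : {ω | X ω ≥ q} = ⋂ n : ℕ, {ω | X ω > q - 1/((n:ℝ)+1)} := by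
      ext ω
      simp only [Set.mem_setOf_eq, Set.mem_iInter]
      constructor
      · intro h n
        have : 0 < 1/((n:ℝ)+1) := by positivity
        linarith
      · intro h
        by_contra hc
        push_neg at hc
        obtain ⟨n, hn⟩ := exists_nat_one_div_lt (sub_pos.mpr hc)
        have := h n
        push_cast at hn
        linarith
    have hge : ∀ n : ℕ, ENNReal.ofReal lam ≤ P {ω | X ω > q - 1/((n:ℝ)+1)} := by
      intro n
      have hlt : q - 1/((n:ℝ)+1) < q := by
        have : 0 < 1/((n:ℝ)+1) := by positivity
        linarith
      have hnotS : q - 1/((n:ℝ)+1) ∉ S := fun h => absurd (csInf_le hSbd h) (not_le.mpr hlt)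
      have hlam_lt : lam < (P {ω | X ω > q - 1/((n:ℝ)+1)}).toReal := by
        rw [hSdef, Set.mem_setOf_eq, not_le] at hnotS
        exact hnotS
      calc ENNReal.ofReal lam
          ≤ ENNReal.ofReal ((P {ω | X ω > q - 1/((n:ℝ)+1)}).toReal) :=
            ENNReal.ofReal_le_ofReal hlam_lt.le
        _ = P {ω | X ω > q - 1/((n:ℝ)+1)} := ENNReal.ofReal_toReal (measure_ne_top P _)
    have hdir : Directed (· ⊇ ·) (fun n : ℕ => {ω | X ω > q - 1/((n:ℝ)+1)}) := by
      apply Antitone.directed_ge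
      intro m n hmn ω hω
      simp only [Set.mem_setOf_eq] at *
      have h1 : 1/((n:ℝ)+1) ≤ 1/((m:ℝ)+1) := by
        apply one_div_le_one_div_of_le (by positivity)
        have : (m:ℝ) ≤ n := by exact_mod_cast hmn
        linarith
      linarith
    rw [hInter, hdir.measure_iInter (fun n => (hmeas _).nullMeasurableSet) ⟨0, measure_ne_top P _⟩]
    have hle : ENNReal.ofReal lam ≤ ⨅ n : ℕ, P {ω | X ω > q - 1/((n:ℝ)+1)} :=
      le_iInf hge
    have hfin : (⨅ n : ℕ, P {ω | X ω > q - 1/((n:ℝ)+1)}) ≠ ⊤ :=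
      ne_top_of_le_ne_top (measure_ne_top P _) (iInf_le _ 0)
    calc lam = (ENNReal.ofReal lam).toReal := (ENNReal.toReal_ofReal hlam0.le).symm
      _ ≤ (⨅ n : ℕ, P {ω | X ω > q - 1/((n:ℝ)+1)}).toReal := ENNReal.toReal_mono hfin hle
  -- key inequality: the value at q is a lower bound
  have key : ∀ y : ℝ,
      (∫ ω, max (X ω - q) 0 ∂P) + lam * q ≤ (∫ ω, max (X ω - y) 0 ∂P) + lam * y := by
    intro y
    rcases le_total q y with hqy | hqy
    · -- q ≤ y
      have hpt : ∀ ω, max (X ω - q) 0 ≤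
          max (X ω - y) 0 + Set.indicator {ω' | X ω' > q} (fun _ => y - q) ω := by
        intro ω
        by_cases h : ω ∈ {ω' | X ω' > q}
        · rw [Set.indicator_of_mem h]
          have h1 : X ω - q ≤ max (X ω - y) 0 + (y - q) := by
            have := le_max_left (X ω - y) (0:ℝ); linarith
          have h0 : (0:ℝ) ≤ max (X ω - y) 0 + (y - q) := by
            have := le_max_right (X ω - y) (0:ℝ); linarith
          exact max_le h1 h0
        · rw [Set.indicator_of_notMem h, add_zero]
          have hle : X ω ≤ q := not_lt.mp h
          apply max_le _ (le_max_right _ _)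
          calc X ω - q ≤ 0 := by linarith
            _ ≤ max (X ω - y) 0 := le_max_right _ _
      have hind_int : Integrable (Set.indicator {ω' | X ω' > q} (fun _ => y - q)) P :=
        (integrable_const _).indicator (hmeas q)
      have hmono := integral_mono (hint q) ((hint y).add hind_int) hpt
      simp only [Pi.add_apply] at hmono
      rw [integral_add (hint y) hind_int, integral_indicator_const _ (hmeas q), measureReal_def] at hmono
      have hfac : (P {ω' | X ω' > q}).toReal • (y - q) ≤ lam * (y - q) := by
        rw [smul_eq_mul]
        apply mul_le_mul_of_nonneg_right hq_le (by linarith)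
      linarith
    · -- y ≤ q
      have hmeasI : MeasurableSet {ω' | X ω' ≥ q} := hX measurableSet_Ici
      have hpt : ∀ ω, max (X ω - q) 0 + Set.indicator {ω' | X ω' ≥ q} (fun _ => q - y) ω ≤
          max (X ω - y) 0 := by
        intro ω
        by_cases h : ω ∈ {ω' | X ω' ≥ q}
        · rw [Set.indicator_of_mem h]
          have hge : q ≤ X ω := h
          have h1 : max (X ω - q) 0 = X ω - q := max_eq_left (by linarith)
          have h2 : X ω - y ≤ max (X ω - y) 0 := le_max_left _ _
          linarith
        · rw [Set.indicator_of_notMem h, add_zero]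
          exact max_le_max (by linarith) le_rfl
      have hind_int : Integrable (Set.indicator {ω' | X ω' ≥ q} (fun _ => q - y)) P :=
        (integrable_const _).indicator hmeasI
      have hmono := integral_mono ((hint q).add hind_int) (hint y) hpt
      simp only [Pi.add_apply] at hmono
      rw [integral_add (hint q) hind_int, integral_indicator_const _ hmeasI, measureReal_def] at hmono
      have hfac : lam * (q - y) ≤ (P {ω' | X ω' ≥ q}).toReal • (q - y) := by
        rw [smul_eq_mul]
        apply mul_le_mul_of_nonneg_right hq_ge (by linarith)
      linarith
  refine le_antisymm (le_ciInf key) ?_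
  have hbdd' : BddBelow (Set.range fun y => (∫ ω, max (X ω - y) 0 ∂P) + lam * y) := by
    refine ⟨(∫ ω, max (X ω - q) 0 ∂P) + lam * q, ?_⟩
    rintro z ⟨y, rfl⟩
    exact key y
  exact ciInf_le hbdd' q
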